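/- Fix β ∈ ℝ and define G(ζ) = |ζ + β − e^{β+ζ−1}| / √(ζ² + 1 + e^{2ζ}). Then G is continuous, G(ζ) = 0 if and only if ζ = 1−β, lim_{ζ→∞} G(ζ) = e^{β−1}, and lim_{ζ→−∞} G(ζ) = 1. Consequently, for every ε > 0 the infimum of G over {ζ : |ζ + β − 1| ≥ ε} is strictly positive. -/

import Mathlib

open Real Filter

private lemma Gaux_inv_atBot : Tendsto (fun ζ : ℝ => ζ⁻¹) atBot (nhds 0) := by
  have h := (tendsto_inv_atTop_zero (𝕜 := ℝ)).comp tendsto_neg_atBot_atTop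
  have h2 := h.neg
  rw [neg_zero] at h2
  exact h2.congr fun ζ => by rw [Function.comp_apply, inv_neg, neg_neg]

set_option maxHeartbeats 1000000 in
theorem G_properties (β : ℝ) (G : ℝ → ℝ)
    (hG : G = fun ζ => |ζ + β - Real.exp (β + ζ - 1)| /
      Real.sqrt (ζ ^ 2 + 1 + Real.exp (2 * ζ))) :
    Continuous G ∧
    (∀ ζ : ℝ, G ζ = 0 ↔ ζ = 1 - β) ∧
    Filter.Tendsto G Filter.atTop (nhds (Real.exp (β - 1))) ∧
    Filter.Tendsto G Filter.atBot (nhds 1) ∧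
    ∀ ε : ℝ, 0 < ε → 0 < sInf (G '' {ζ : ℝ | ε ≤ |ζ + β - 1|}) := by
  have hden : ∀ ζ : ℝ, 0 < ζ ^ 2 + 1 + Real.exp (2 * ζ) := by
    intro ζ; have := Real.exp_pos (2 * ζ); positivity
  have hsq : ∀ ζ : ℝ, 0 < Real.sqrt (ζ ^ 2 + 1 + Real.exp (2 * ζ)) :=
    fun ζ => Real.sqrt_pos.2 (hden ζ)
  -- continuity
  have hcont : Continuous G := by
    rw [hG]
    exact Continuous.div (by continuity) (by continuity) (fun ζ => (hsq ζ).ne')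
  -- zeros
  have hzero : ∀ ζ : ℝ, G ζ = 0 ↔ ζ = 1 - β := by
    intro ζ
    rw [hG]
    simp only
    rw [div_eq_iff (hsq ζ).ne', zero_mul, abs_eq_zero, sub_eq_zero]
    constructor
    · intro h
      by_contra hne
      have ht : β + ζ - 1 ≠ 0 := fun h0 => hne (by linarith)
      have := Real.add_one_lt_exp ht
      linarith
    · intro h
      subst h
      rw [show β + (1 - β) - 1 = 0 by ring, Real.exp_zero]
      ring
  -- atTop
  have hT : Tendsto G atTop (nhds (Real.exp (β - 1))) := by
    have key : ∀ ζ : ℝ, G ζ =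
        |(ζ + β) * Real.exp (-ζ) - Real.exp (β - 1)| /
          Real.sqrt ((ζ ^ 2 + 1) * Real.exp (-(2 * ζ)) + 1) := by
      intro ζ
      have e2 : Real.exp (-ζ) * Real.exp ζ = 1 := by
        rw [← Real.exp_add]; simp
      have e3 : Real.exp (-(2 * ζ)) * Real.exp (2 * ζ) = 1 := by
        rw [← Real.exp_add]; simp
      have h1 : ζ + β - Real.exp (β + ζ - 1)
          = ((ζ + β) * Real.exp (-ζ) - Real.exp (β - 1)) * Real.exp ζ := by
        have e1 : Real.exp (β + ζ - 1) = Real.exp (β - 1) * Real.exp ζ := by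
          rw [← Real.exp_add]; ring_nf
        rw [e1, sub_mul, mul_assoc, e2, mul_one]
      have h2 : ζ ^ 2 + 1 + Real.exp (2 * ζ)
          = ((ζ ^ 2 + 1) * Real.exp (-(2 * ζ)) + 1) * (Real.exp ζ) ^ 2 := by
        have h : (Real.exp ζ) ^ 2 = Real.exp (2 * ζ) := by
          rw [sq, ← Real.exp_add]; ring_nf
        rw [h, add_mul, mul_assoc, e3, mul_one, one_mul]
      rw [hG]
      simp only
      rw [h1, h2, abs_mul, Real.abs_exp,
        Real.sqrt_mul (by positivity), Real.sqrt_sq (Real.exp_pos ζ).le,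
        mul_div_mul_right _ _ (Real.exp_ne_zero ζ)]
    rw [funext key]
    have hexp : Tendsto (fun ζ : ℝ => Real.exp (-ζ)) atTop (nhds 0) :=
      Real.tendsto_exp_atBot.comp tendsto_neg_atTop_atBot
    have hxe : Tendsto (fun ζ : ℝ => ζ * Real.exp (-ζ)) atTop (nhds 0) := by
      have := Real.tendsto_pow_mul_exp_neg_atTop_nhds_zero 1
      simpa using this
    have t1 : Tendsto (fun ζ : ℝ => (ζ + β) * Real.exp (-ζ)) atTop (nhds 0) := by
      have : Tendsto (fun ζ : ℝ => ζ * Real.exp (-ζ) + β * Real.exp (-ζ)) atTop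
          (nhds (0 + β * 0)) := hxe.add (hexp.const_mul β)
      simpa [add_mul] using this
    have t2 : Tendsto (fun ζ : ℝ => (ζ ^ 2 + 1) * Real.exp (-(2 * ζ))) atTop (nhds 0) := by
      have h : ∀ ζ : ℝ, (ζ ^ 2 + 1) * Real.exp (-(2 * ζ))
          = (ζ * Real.exp (-ζ)) ^ 2 + (Real.exp (-ζ)) ^ 2 := by
        intro ζ
        have : Real.exp (-(2 * ζ)) = Real.exp (-ζ) * Real.exp (-ζ) := by
          rw [← Real.exp_add]; ring_nf
        rw [this]; ring
      rw [funext h]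
      have : Tendsto (fun ζ : ℝ => (ζ * Real.exp (-ζ)) ^ 2 + (Real.exp (-ζ)) ^ 2) atTop
          (nhds ((0:ℝ) ^ 2 + (0:ℝ) ^ 2)) := (hxe.pow 2).add (hexp.pow 2)
      simpa using this
    have tnum : Tendsto (fun ζ : ℝ => |(ζ + β) * Real.exp (-ζ) - Real.exp (β - 1)|) atTop
        (nhds (Real.exp (β - 1))) := by
      have := (t1.sub (tendsto_const_nhds (x := Real.exp (β - 1)))).abs
      simpa [abs_of_pos (Real.exp_pos (β - 1))] using this
    have tden : Tendsto (fun ζ : ℝ => Real.sqrt ((ζ ^ 2 + 1) * Real.exp (-(2 * ζ)) + 1)) atTop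
        (nhds 1) := by
      have h := (Real.continuous_sqrt.tendsto ((0:ℝ) + 1)).comp
        (t2.add (tendsto_const_nhds (x := (1:ℝ))))
      rw [show Real.sqrt ((0:ℝ) + 1) = 1 by norm_num] at h
      simpa [Function.comp_def] using h
    simpa [Pi.div_def] using tnum.div tden one_ne_zero
  -- atBot
  have hB : Tendsto G atBot (nhds 1) := by
    have hinv : Tendsto (fun ζ : ℝ => ζ⁻¹) atBot (nhds 0) := Gaux_inv_atBot
    have harg : Tendsto (fun ζ : ℝ => β + ζ - 1) atBot atBot :=
      (tendsto_atBot_add_const_right _ (β - 1) tendsto_id).congr fun ζ => by simp only [id_eq]; ring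
    have hexp2 : Tendsto (fun ζ : ℝ => Real.exp (β + ζ - 1)) atBot (nhds 0) :=
      Real.tendsto_exp_atBot.comp harg
    have harg2 : Tendsto (fun ζ : ℝ => 2 * ζ) atBot atBot :=
      tendsto_id.const_mul_atBot two_pos
    have hexp3 : Tendsto (fun ζ : ℝ => Real.exp (2 * ζ)) atBot (nhds 0) :=
      Real.tendsto_exp_atBot.comp harg2
    have tnum : Tendsto (fun ζ : ℝ => |1 + β * ζ⁻¹ - Real.exp (β + ζ - 1) * ζ⁻¹|) atBot
        (nhds 1) := by
      have h : Tendsto (fun ζ : ℝ => 1 + β * ζ⁻¹ - Real.exp (β + ζ - 1) * ζ⁻¹) atBot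
          (nhds (1 + β * 0 - 0 * 0)) :=
        ((tendsto_const_nhds.add (hinv.const_mul β)).sub (hexp2.mul hinv))
      have h' := h.abs
      norm_num at h'
      exact h'
    have tden : Tendsto (fun ζ : ℝ =>
        Real.sqrt (1 + (ζ⁻¹) ^ 2 + Real.exp (2 * ζ) * (ζ⁻¹) ^ 2)) atBot (nhds 1) := by
      have h : Tendsto (fun ζ : ℝ => 1 + (ζ⁻¹) ^ 2 + Real.exp (2 * ζ) * (ζ⁻¹) ^ 2) atBot
          (nhds (1 + (0:ℝ) ^ 2 + 0 * (0:ℝ) ^ 2)) :=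
        (tendsto_const_nhds.add (hinv.pow 2)).add (hexp3.mul (hinv.pow 2))
      have h' := (Real.continuous_sqrt.tendsto (1 + (0:ℝ) ^ 2 + 0 * (0:ℝ) ^ 2)).comp h
      rw [show Real.sqrt (1 + (0:ℝ) ^ 2 + 0 * (0:ℝ) ^ 2) = 1 by norm_num] at h'
      simpa [Function.comp_def] using h'
    have hlim : Tendsto (fun ζ : ℝ => |1 + β * ζ⁻¹ - Real.exp (β + ζ - 1) * ζ⁻¹| /
        Real.sqrt (1 + (ζ⁻¹) ^ 2 + Real.exp (2 * ζ) * (ζ⁻¹) ^ 2)) atBot (nhds 1) := by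
      simpa [Pi.div_def] using tnum.div tden one_ne_zero
    refine hlim.congr' ?_
    filter_upwards [eventually_lt_atBot (0:ℝ)] with ζ hζ
    have hζ' : ζ ≠ 0 := hζ.ne
    have h1 : ζ + β - Real.exp (β + ζ - 1)
        = (1 + β * ζ⁻¹ - Real.exp (β + ζ - 1) * ζ⁻¹) * ζ := by
      field_simp
    have h2 : ζ ^ 2 + 1 + Real.exp (2 * ζ)
        = (1 + (ζ⁻¹) ^ 2 + Real.exp (2 * ζ) * (ζ⁻¹) ^ 2) * ζ ^ 2 := by
      field_simp
    rw [hG]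
    simp only
    rw [h1, h2, abs_mul, Real.sqrt_mul (by positivity), Real.sqrt_sq_eq_abs,
      mul_div_mul_right _ _ (abs_ne_zero.2 hζ')]
  refine ⟨hcont, hzero, hT, hB, ?_⟩
  -- infimum
  intro ε hε
  set S : Set ℝ := {ζ : ℝ | ε ≤ |ζ + β - 1|} with hS
  have hSclosed : IsClosed S := by
    have : S = (fun ζ : ℝ => |ζ + β - 1|) ⁻¹' Set.Ici ε := rfl
    rw [this]
    exact IsClosed.preimage (by continuity) isClosed_Ici
  have hSne : S.Nonempty := ⟨1 - β + ε, by
    simp only [hS, Set.mem_setOf_eq]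
    rw [show 1 - β + ε + β - 1 = ε by ring, abs_of_pos hε]⟩
  have hGpos : ∀ ζ ∈ S, 0 < G ζ := by
    intro ζ hζ
    have h0 : 0 ≤ G ζ := by
      rw [hG]; positivity
    rcases h0.lt_or_eq with h | h
    · exact h
    · exfalso
      have := (hzero ζ).1 h.symm
      rw [this] at hζ
      simp only [hS, Set.mem_setOf_eq] at hζ
      rw [show 1 - β + β - 1 = 0 by ring, abs_zero] at hζ
      linarith
  set c₀ : ℝ := min (Real.exp (β - 1) / 2) (1 / 2) with hc₀
  have hc₀pos : 0 < c₀ := lt_min (by positivity) (by norm_num)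
  obtain ⟨A, hA⟩ := eventually_atTop.1 (hT.eventually (eventually_gt_nhds
    (half_lt_self (Real.exp_pos (β - 1)))))
  obtain ⟨B, hB'⟩ := eventually_atBot.1 (hB.eventually (eventually_gt_nhds
    (by norm_num : (1:ℝ)/2 < 1)))
  have hout : ∀ ζ ∈ S, ζ ∉ Set.Icc B A → c₀ ≤ G ζ := by
    intro ζ _ hζ
    rw [Set.mem_Icc, not_and_or, not_le, not_le] at hζ
    rcases hζ with h | h
    · exact le_trans (min_le_right _ _) (hB' ζ h.le).le
    · exact le_trans (min_le_left _ _) (hA ζ h.le).le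
  set K : Set ℝ := Set.Icc B A ∩ S with hK
  have hKcomp : IsCompact K := isCompact_Icc.inter_right hSclosed
  have hbound : ∃ c : ℝ, 0 < c ∧ ∀ ζ ∈ S, c ≤ G ζ := by
    rcases K.eq_empty_or_nonempty with hKe | hKne
    · refine ⟨c₀, hc₀pos, fun ζ hζ => hout ζ hζ fun hIcc => ?_⟩
      exact Set.notMem_empty ζ (hKe ▸ Set.mem_inter hIcc hζ)
    · obtain ⟨z, hzK, hz⟩ := hKcomp.exists_isMinOn hKne hcont.continuousOn
      refine ⟨min c₀ (G z), lt_min hc₀pos (hGpos z hzK.2), fun ζ hζ => ?_⟩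
      by_cases hIcc : ζ ∈ Set.Icc B A
      · exact le_trans (min_le_right _ _) (hz (Set.mem_inter hIcc hζ))
      · exact le_trans (min_le_left _ _) (hout ζ hζ hIcc)
  obtain ⟨c, hcpos, hc⟩ := hbound
  have : c ≤ sInf (G '' S) := by
    apply le_csInf (hSne.image G)
    rintro x ⟨ζ, hζ, rfl⟩
    exact hc ζ hζ
  linarith
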